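/- The two notions of quasi-locality differ: Let X := ℤ × {0,1}, for n ∈ ℤ set P_n := {((n,0),(n,1)), ((n,1),(n,0))}, and let 𝒞 := {V ⊆ X × X : V ⊆ Δ_X ∪ ⋃_{n∈F} P_n for some finite F ⊆ ℤ}; then 𝒞 is a coarse structure on X, compatible with the bornology of finite subsets. Let H := ℓ²(X;ℂ) with standard orthonormal basis (δ_x)_{x∈X}, let φ be the representation of bounded functions on X by multiplication operators, and let A ∈ B(H) be the bounded operator determined by A δ_{(n,0)} = e^{−|n|} δ_{(n,1)} and A δ_{(n,1)} = 0 for all n ∈ ℤ. Then: (a) for every ε > 0 there exists an entourage U ∈ 𝒞 such that ‖φ(χ_{B'}) A φ(χ_B)‖ ≤ ε for all subsets B, B' ⊆ X with U[B] ∩ U[B'] = ∅; but (b) A is not quasi-local: there is no entourage U ∈ 𝒞 such that for every ε > 0 there exists n ∈ ℕ with ‖φ(χ_{B'}) A φ(χ_B)‖ ≤ ε for all Uⁿ-separated subsets B, B' of X. -/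

import Mathlib

/-- The `U`-thickening `U[B] := {x : ∃ b ∈ B, (x, b) ∈ U}` of a subset `B` by an
entourage `U`. -/
def thick {X : Type*} (U : Set (X × X)) (B : Set X) : Set X :=
  {x | ∃ b ∈ B, (x, b) ∈ U}

/-- Composition of relations: `U ∘ V`. -/
def relComp {X : Type*} (U V : Set (X × X)) : Set (X × X) :=
  {p | ∃ z, (p.1, z) ∈ U ∧ (z, p.2) ∈ V}

/-- `iterComp U n` is the `(n+1)`-fold composition `U ∘ U ∘ ⋯ ∘ U`. -/
def iterComp {X : Type*} (U : Set (X × X)) : ℕ → Set (X × X)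
  | 0 => U
  | n + 1 => relComp (iterComp U n) U

/-- A bornological coarse structure on a set `X`: a coarse structure (a collection of
entourages containing the diagonal and closed under subsets, finite unions, inverses and
compositions) together with a compatible bornology (a collection of bounded sets covering
`X` and closed under subsets and finite unions, such that controlled thickenings of bounded
sets are bounded). -/
structure BornCoarse (X : Type*) where
  /-- the entourages -/
  entourages : Set (Set (X × X))
  diag_mem : {p : X × X | p.1 = p.2} ∈ entourages
  subset_mem : ∀ ⦃U V : Set (X × X)⦄, U ∈ entourages → V ⊆ U → V ∈ entourages
  union_mem : ∀ ⦃U V : Set (X × X)⦄, U ∈ entourages → V ∈ entourages → U ∪ V ∈ entourages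
  inv_mem : ∀ ⦃U : Set (X × X)⦄, U ∈ entourages → {p : X × X | (p.2, p.1) ∈ U} ∈ entourages
  comp_mem : ∀ ⦃U V : Set (X × X)⦄, U ∈ entourages → V ∈ entourages →
    relComp U V ∈ entourages
  /-- the bounded subsets -/
  bounded : Set (Set X)
  covers : ∀ x : X, ∃ B ∈ bounded, x ∈ B
  empty_mem : (∅ : Set X) ∈ bounded
  bounded_subset : ∀ ⦃B C : Set X⦄, B ∈ bounded → C ⊆ B → C ∈ bounded
  bounded_union : ∀ ⦃B C : Set X⦄, B ∈ bounded → C ∈ bounded → B ∪ C ∈ bounded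
  compat : ∀ ⦃U : Set (X × X)⦄ ⦃B : Set X⦄, U ∈ entourages → B ∈ bounded →
    thick U B ∈ bounded

/-- A map between bornological coarse spaces is controlled if it maps entourages to
entourages. -/
def IsControlled {X X' : Type*} (S : BornCoarse X) (S' : BornCoarse X') (f : X → X') :
    Prop :=
  ∀ U ∈ S.entourages, (fun p : X × X => (f p.1, f p.2)) '' U ∈ S'.entourages

/-- A map between bornological coarse spaces is proper if preimages of bounded sets are
bounded. -/
def IsProper {X X' : Type*} (S : BornCoarse X) (S' : BornCoarse X') (f : X → X') : Prop :=
  ∀ B ∈ S'.bounded, f ⁻¹' B ∈ S.bounded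

/-- A morphism of bornological coarse spaces is a controlled and proper map. -/
def IsMorphism {X X' : Type*} (S : BornCoarse X) (S' : BornCoarse X') (f : X → X') : Prop :=
  IsControlled S S' f ∧ IsProper S S' f

noncomputable section

/-- The characteristic function of `B ⊆ X` as a bounded (continuous) function on the
discrete space `X`. -/
def chi {X : Type*} [TopologicalSpace X] [DiscreteTopology X] (B : Set X) :
    BoundedContinuousFunction X ℂ :=
  BoundedContinuousFunction.ofNormedAddCommGroup (B.indicator fun _ => (1 : ℂ))
    continuous_of_discreteTopology 1 fun x => by
      by_cases hx : x ∈ B <;> simp [Set.indicator_apply, hx]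

/-- A unital `*`-homomorphism from the `C*`-algebra `C(X)` of bounded functions on the
discrete space `X` into the bounded operators on the Hilbert space `H`. -/
abbrev CtrlRep (X : Type*) [TopologicalSpace X] [DiscreteTopology X] (H : Type*)
    [NormedAddCommGroup H] [InnerProductSpace ℂ H] [CompleteSpace H] :=
  BoundedContinuousFunction X ℂ →⋆ₐ[ℂ] (H →L[ℂ] H)

section

variable {X : Type*} [TopologicalSpace X] [DiscreteTopology X]
variable {H : Type*} [NormedAddCommGroup H] [InnerProductSpace ℂ H] [CompleteSpace H]
variable {H' : Type*} [NormedAddCommGroup H'] [InnerProductSpace ℂ H'] [CompleteSpace H']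

/-- `H(B) = φ(χ_B)H`, the subspace of vectors supported on `B`. -/
def Hsub (φ : CtrlRep X H) (B : Set X) : Set H :=
  Set.range ⇑(φ (chi B))

/-- `(H, φ)` is an `X`-controlled Hilbert space: `H(B)` is separable for every bounded
subset `B`. -/
def IsControlledHilbert (S : BornCoarse X) (φ : CtrlRep X H) : Prop :=
  ∀ B ∈ S.bounded, TopologicalSpace.IsSeparable (Hsub φ B)

/-- A bounded operator has controlled propagation if there is an entourage `U` with
`A(H(B)) ⊆ H'(U[B])` for every bounded `B`. -/
def HasCtrlProp (S : BornCoarse X) (φ : CtrlRep X H) (φ' : CtrlRep X H')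
    (A : H →L[ℂ] H') : Prop :=
  ∃ U ∈ S.entourages, ∀ B ∈ S.bounded, ⇑A '' Hsub φ B ⊆ Hsub φ' (thick U B)

/-- A bounded operator is quasi-local if there is an entourage `U` such that for every
`ε > 0` there is `n` with `‖φ'(χ_{B'}) A φ(χ_B)‖ ≤ ε` for all `Uⁿ`-separated `B, B'`. -/
def IsQuasiLocal (S : BornCoarse X) (φ : CtrlRep X H) (φ' : CtrlRep X H')
    (A : H →L[ℂ] H') : Prop :=
  ∃ U ∈ S.entourages, ∀ ε : ℝ, 0 < ε → ∃ n : ℕ, ∀ B B' : Set X,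
    thick (iterComp U n) B ∩ thick (iterComp U n) B' = ∅ →
      ‖φ' (chi B') ∘L A ∘L φ (chi B)‖ ≤ ε

/-- A bounded operator is locally compact if `φ(χ_B)A` and `Aφ(χ_B)` are compact for every
bounded `B`. -/
def IsLocallyCompactOp (S : BornCoarse X) (φ : CtrlRep X H) (A : H →L[ℂ] H) : Prop :=
  ∀ B ∈ S.bounded,
    IsCompactOperator ⇑(φ (chi B) ∘L A) ∧ IsCompactOperator ⇑(A ∘L φ (chi B))

/-- A controlled Hilbert space is locally finite if `H(B)` is finite-dimensional for every
bounded `B`. -/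
def IsLocallyFiniteRep (S : BornCoarse X) (φ : CtrlRep X H) : Prop :=
  ∀ B ∈ S.bounded, FiniteDimensional ℂ ↥(LinearMap.range (φ (chi B) : H →ₗ[ℂ] H))

/-- A controlled Hilbert space is ample if there is an entourage `U` such that `H(U[x])` is
infinite-dimensional for every point `x`. -/
def IsAmple (S : BornCoarse X) (φ : CtrlRep X H) : Prop :=
  ∃ U ∈ S.entourages, ∀ x : X,
    ¬FiniteDimensional ℂ ↥(LinearMap.range (φ (chi (thick U {x})) : H →ₗ[ℂ] H))

/-- A closed subspace `K ⊆ H` is a locally finite subspace if it carries an `X`-control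
making it a locally finite `X`-controlled Hilbert space such that the inclusion `K → H`
has controlled propagation. -/
def IsLocFinSubspace (S : BornCoarse X) (φ : CtrlRep X H) (K : Submodule ℂ H) : Prop :=
  ∃ hK : IsClosed (K : Set H),
    haveI : CompleteSpace K := hK.completeSpace_coe
    ∃ ψ : CtrlRep X ↥K, IsControlledHilbert S ψ ∧ IsLocallyFiniteRep S ψ ∧
      HasCtrlProp S ψ φ K.subtypeL

end

end

/-- The generating entourage `P_n` flipping the two points `(n, false)` and `(n, true)`. -/
def pairFlip (n : ℤ) : Set ((ℤ × Bool) × (ℤ × Bool)) :=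
  {((n, false), (n, true)), ((n, true), (n, false))}

/-- The coarse structure on `ℤ × Bool` generated by the entourages `P_n`. -/
def exampleCoarse : Set (Set ((ℤ × Bool) × (ℤ × Bool))) :=
  {V | ∃ F : Finset ℤ,
    V ⊆ {p : (ℤ × Bool) × (ℤ × Bool) | p.1 = p.2} ∪ ⋃ n ∈ F, pairFlip n}

open scoped Classical


/-! ### Auxiliary lemmas -/

/-- The model entourage determined by a finite set `F`. -/
abbrev RR (F : Finset ℤ) : Set ((ℤ × Bool) × (ℤ × Bool)) :=
  {p : (ℤ × Bool) × (ℤ × Bool) | p.1 = p.2} ∪ ⋃ n ∈ F, pairFlip n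

lemma mem_pairFlip {n : ℤ} {p : (ℤ × Bool) × (ℤ × Bool)} :
    p ∈ pairFlip n ↔ p = ((n, false), (n, true)) ∨ p = ((n, true), (n, false)) := by
  simp [pairFlip]

lemma RR_comp {F F' : Finset ℤ} : relComp (RR F) (RR F') ⊆ RR (F ∪ F') := by
  rintro ⟨x, y⟩ ⟨z, hxz, hzy⟩
  rcases hxz with h1 | h1
  · simp only [Set.mem_setOf_eq] at h1
    subst h1
    rcases hzy with h2 | h2
    · exact Or.inl h2
    · simp only [Set.mem_iUnion] at h2
      obtain ⟨k, hk, hp⟩ := h2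
      exact Or.inr (Set.mem_iUnion.2 ⟨k, Set.mem_iUnion.2 ⟨Finset.mem_union_right _ hk, hp⟩⟩)
  · simp only [Set.mem_iUnion] at h1
    obtain ⟨k, hk, hp⟩ := h1
    rcases hzy with h2 | h2
    · simp only [Set.mem_setOf_eq] at h2
      subst h2
      exact Or.inr (Set.mem_iUnion.2 ⟨k, Set.mem_iUnion.2 ⟨Finset.mem_union_left _ hk, hp⟩⟩)
    · simp only [Set.mem_iUnion] at h2
      obtain ⟨j, hj, hq⟩ := h2
      rcases mem_pairFlip.1 hp with e1 | e1 <;> rcases mem_pairFlip.1 hq with e2 | e2 <;>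
        · injection e1 with a1 b1; injection e2 with a2 b2
          subst a1; subst b1
          left; simp_all

lemma iterComp_subset_RR {U : Set ((ℤ × Bool) × (ℤ × Bool))} {F : Finset ℤ}
    (hU : U ⊆ RR F) (n : ℕ) : iterComp U n ⊆ RR F := by
  induction n with
  | zero => exact hU
  | succ n ih =>
    intro p hp
    obtain ⟨z, h1, h2⟩ := hp
    have : p ∈ relComp (RR F) (RR F) := ⟨z, ih h1, hU h2⟩
    simpa [Finset.union_self] using RR_comp this

lemma thick_RR_singleton {F : Finset ℤ} {m : ℤ} (hm : m ∉ F) (b : Bool) :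
    thick (RR F) {(m, b)} ⊆ {(m, b)} := by
  rintro x ⟨c, hc, hxc⟩
  simp only [Set.mem_singleton_iff] at hc
  subst hc
  rcases hxc with h | h
  · simpa using h
  · simp only [Set.mem_iUnion] at h
    obtain ⟨k, hk, hp⟩ := h
    rcases mem_pairFlip.1 hp with e | e <;>
      · injection e with a1 b1
        exfalso
        apply hm
        have : m = k := by simp_all
        rwa [this]

lemma thick_finite {U : Set ((ℤ × Bool) × (ℤ × Bool))} {F : Finset ℤ} (hU : U ⊆ RR F)
    {B : Set (ℤ × Bool)} (hB : B.Finite) : (thick U B).Finite := by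
  have hsub : thick U B ⊆ B ∪ ⋃ n ∈ (F : Set ℤ), {(n, false), (n, true)} := by
    rintro x ⟨c, hc, hxc⟩
    rcases hU hxc with h | h
    · simp only [Set.mem_setOf_eq] at h; subst h; exact Or.inl hc
    · simp only [Set.mem_iUnion] at h
      obtain ⟨k, hk, hp⟩ := h
      right
      refine Set.mem_biUnion hk ?_
      rcases mem_pairFlip.1 hp with e | e <;>
        · injection e with a1 b1; subst a1; simp
  exact ((hB.union (F.finite_toSet.biUnion fun n _ =>
    (Set.finite_singleton _).insert _))).subset hsub

/-- The example bornological coarse space on `ℤ × Bool`. -/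
def exampleBC : BornCoarse (ℤ × Bool) where
  entourages := exampleCoarse
  diag_mem := ⟨∅, by simp⟩
  subset_mem := fun U V ⟨F, hF⟩ hVU => ⟨F, hVU.trans hF⟩
  union_mem := fun U V ⟨F, hF⟩ ⟨F', hF'⟩ => ⟨F ∪ F', by
    refine Set.union_subset (hF.trans ?_) (hF'.trans ?_) <;>
      refine Set.union_subset_union subset_rfl ?_ <;>
      · intro x hx
        simp only [Set.mem_iUnion] at hx ⊢
        obtain ⟨k, hk, h⟩ := hx
        exact ⟨k, by simp [hk], h⟩⟩
  inv_mem := fun U ⟨F, hF⟩ => ⟨F, by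
    rintro ⟨x, y⟩ h
    simp only [Set.mem_setOf_eq] at h
    rcases hF h with h1 | h1
    · exact Or.inl h1.symm
    · simp only [Set.mem_iUnion] at h1
      obtain ⟨k, hk, hp⟩ := h1
      refine Or.inr (Set.mem_iUnion.2 ⟨k, Set.mem_iUnion.2 ⟨hk, ?_⟩⟩)
      rcases mem_pairFlip.1 hp with e | e
      · rw [mem_pairFlip]; right; injection e with a b; simp_all
      · rw [mem_pairFlip]; left; injection e with a b; simp_all⟩
  comp_mem := fun U V ⟨F, hF⟩ ⟨F', hF'⟩ => ⟨F ∪ F', by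
    intro p hp
    obtain ⟨z, h1, h2⟩ := hp
    exact RR_comp ⟨z, hF h1, hF' h2⟩⟩
  bounded := {B | B.Finite}
  covers := fun x => ⟨{x}, Set.finite_singleton x, rfl⟩
  empty_mem := Set.finite_empty
  bounded_subset := fun B C hB hCB => hB.subset hCB
  bounded_union := fun B C hB hC => hB.union hC
  compat := fun U B ⟨F, hF⟩ hB => thick_finite hF hB

section AuxHilbert

variable {X : Type*} [TopologicalSpace X] [DiscreteTopology X]

lemma chi_apply (B : Set X) (x : X) : chi B x = if x ∈ B then 1 else 0 := by
  simp [chi, Set.indicator_apply]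

lemma chi_star (B : Set X) : star (chi B) = chi B := by
  ext x
  by_cases hx : x ∈ B <;> simp [chi_apply, hx]

lemma chi_mul_self (B : Set X) : chi B * chi B = chi B := by
  ext x
  by_cases hx : x ∈ B <;> simp [chi_apply, hx]

variable {H : Type*} [NormedAddCommGroup H] [InnerProductSpace ℂ H] [CompleteSpace H]

lemma proj_contract (p : H →L[ℂ] H) (hsa : ContinuousLinearMap.adjoint p = p)
    (hid : ∀ v, p (p v) = p v) (v : H) : ‖p v‖ ≤ ‖v‖ := by
  rcases eq_or_lt_of_le (norm_nonneg (p v)) with h0 | h0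
  · rw [← h0]; exact norm_nonneg v
  have h1 : ‖p v‖ ^ 2 = RCLike.re (inner ℂ (p v) (p v)) := (inner_self_eq_norm_sq _).symm
  have h2 : inner ℂ (p v) (p v) = inner ℂ (p v) v := by
    have h := ContinuousLinearMap.adjoint_inner_left p v (p v)
    rw [hsa, hid] at h
    exact h.symm
  have h3 : ‖p v‖ ^ 2 ≤ ‖p v‖ * ‖v‖ := by
    rw [h1, h2]
    exact le_trans (RCLike.re_le_norm _) (norm_inner_le_norm _ _)
  exact le_of_mul_le_mul_left (by rw [← sq]; exact h3) h0

lemma A_small (δ : ℤ × Bool → H) (hONB : Orthonormal ℂ δ) (A : H →L[ℂ] H)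
    (hA₀ : ∀ n : ℤ, A (δ (n, false)) = (Real.exp (-|(n : ℝ)|) : ℂ) • δ (n, true))
    (N : ℕ) (D : Set (ℤ × Bool)) (hD : ∀ x ∈ D, x.2 = false ∧ (N : ℤ) + 1 ≤ |x.1|) :
    ∀ u ∈ Submodule.span ℂ (δ '' D), ‖A u‖ ≤ Real.exp (-((N : ℝ) + 1)) * ‖u‖ := by
  intro u hu
  set c : ℝ := Real.exp (-((N : ℝ) + 1)) with hc
  have hc0 : 0 ≤ c := (Real.exp_pos _).le
  obtain ⟨l, hl, rfl⟩ := (Finsupp.mem_span_image_iff_linearCombination ℂ).1 hu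
  rw [Finsupp.mem_supported] at hl
  have hmem : ∀ x ∈ l.support, x.2 = false ∧ (N : ℤ) + 1 ≤ |x.1| :=
    fun x hx => hD x (hl hx)
  have hinj : ∀ x ∈ l.support, ∀ y ∈ l.support, x.1 = y.1 → x = y := by
    intro x hx y hy h
    have := (hmem x hx).1; have := (hmem y hy).1
    exact Prod.ext h (by simp_all)
  set t : Finset ℤ := l.support.image Prod.fst with ht
  have ht' : ∀ n ∈ t, (N : ℤ) + 1 ≤ |n| := by
    intro n hn
    simp only [ht, Finset.mem_image] at hn
    obtain ⟨x, hx, rfl⟩ := hn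
    exact (hmem x hx).2
  have hxeq : ∀ x ∈ l.support, x = (x.1, false) :=
    fun x hx => Prod.ext rfl (hmem x hx).1
  have hu' : Finsupp.linearCombination ℂ δ l = ∑ n ∈ t, l (n, false) • δ (n, false) := by
    rw [Finsupp.linearCombination_apply, Finsupp.sum, ht, Finset.sum_image hinj]
    exact Finset.sum_congr rfl fun x hx => by rw [← hxeq x hx]
  have hAu : A (Finsupp.linearCombination ℂ δ l) =
      ∑ n ∈ t, ((l (n, false) : ℂ) * (Real.exp (-|(n : ℝ)|) : ℂ)) • δ (n, true) := by
    rw [hu', map_sum]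
    refine Finset.sum_congr rfl fun n hn => ?_
    rw [map_smul, hA₀, smul_smul]
  have e_on : Orthonormal ℂ (fun n : ℤ => δ (n, false)) :=
    hONB.comp _ (fun a b h => by simpa using h)
  have f_on : Orthonormal ℂ (fun n : ℤ => δ (n, true)) :=
    hONB.comp _ (fun a b h => by simpa using h)
  have norm_sq : ∀ (v : ℤ → H), Orthonormal ℂ v → ∀ d : ℤ → ℂ,
      ‖∑ n ∈ t, d n • v n‖ ^ 2 = ∑ n ∈ t, ‖d n‖ ^ 2 := by
    intro v hv d
    have h1 : inner ℂ (∑ n ∈ t, d n • v n) (∑ n ∈ t, d n • v n)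
        = ∑ n ∈ t, (starRingEnd ℂ) (d n) * d n := hv.inner_sum d d t
    have h2 : ∑ n ∈ t, (starRingEnd ℂ) (d n) * d n = ((∑ n ∈ t, ‖d n‖ ^ 2 : ℝ) : ℂ) := by
      push_cast
      exact Finset.sum_congr rfl fun n _ => RCLike.conj_mul (d n)
    rw [← inner_self_eq_norm_sq (𝕜 := ℂ), h1, h2]
    simp [← Complex.ofReal_pow]
  have h1 : ‖Finsupp.linearCombination ℂ δ l‖ ^ 2 = ∑ n ∈ t, ‖l (n, false)‖ ^ 2 := by
    rw [hu']; exact norm_sq _ e_on _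
  have h2 : ‖A (Finsupp.linearCombination ℂ δ l)‖ ^ 2
      = ∑ n ∈ t, ‖(l (n, false) : ℂ) * (Real.exp (-|(n : ℝ)|) : ℂ)‖ ^ 2 := by
    rw [hAu]; exact norm_sq _ f_on _
  have key : ‖A (Finsupp.linearCombination ℂ δ l)‖ ^ 2
      ≤ (c * ‖Finsupp.linearCombination ℂ δ l‖) ^ 2 := by
    rw [mul_pow, h1, h2, Finset.mul_sum]
    refine Finset.sum_le_sum fun n hn => ?_
    have hexp : Real.exp (-|(n : ℝ)|) ≤ c := by
      rw [hc]
      apply Real.exp_le_exp.2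
      have := ht' n hn
      have : ((N : ℝ) + 1) ≤ |(n : ℝ)| := by
        rw [← Int.cast_abs]; exact_mod_cast this
      linarith
    rw [norm_mul, mul_pow, Complex.norm_real, Real.norm_eq_abs,
      abs_of_pos (Real.exp_pos _), mul_comm (c ^ 2)]
    refine mul_le_mul_of_nonneg_left ?_ (by positivity)
    exact pow_le_pow_left₀ (Real.exp_pos _).le hexp 2
  have hA0 : 0 ≤ ‖A (Finsupp.linearCombination ℂ δ l)‖ := norm_nonneg _
  have hB0 : 0 ≤ c * ‖Finsupp.linearCombination ℂ δ l‖ := by positivity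
  calc ‖A (Finsupp.linearCombination ℂ δ l)‖
      = Real.sqrt (‖A (Finsupp.linearCombination ℂ δ l)‖ ^ 2) := (Real.sqrt_sq hA0).symm
    _ ≤ Real.sqrt ((c * ‖Finsupp.linearCombination ℂ δ l‖) ^ 2) := Real.sqrt_le_sqrt key
    _ = c * ‖Finsupp.linearCombination ℂ δ l‖ := Real.sqrt_sq hB0

end AuxHilbert

/-- The two notions of quasi-locality differ: on `X = ℤ × Bool` with the coarse structure
`exampleCoarse` (which is a coarse structure, compatible with the bornology of finite
subsets), the multiplication representation `φ` on `ℓ²(X; ℂ)` (with orthonormal basis `δ`)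
and the operator `A` with `A δ_{(n,false)} = e^{-|n|} δ_{(n,true)}`, `A δ_{(n,true)} = 0`
satisfy: (a) for every `ε > 0` there is an entourage `U` with
`‖φ(χ_{B'}) A φ(χ_B)‖ ≤ ε` for all `U`-separated `B, B'`; but (b) `A` is not quasi-local. -/
theorem quasiLocal_notions_differ {H : Type*} [NormedAddCommGroup H]
    [InnerProductSpace ℂ H] [CompleteSpace H]
    (δ : ℤ × Bool → H) (hONB : Orthonormal ℂ δ)
    (htotal : (Submodule.span ℂ (Set.range δ)).topologicalClosure = ⊤)
    (φ : CtrlRep (ℤ × Bool) H)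
    (hφ : ∀ (B : Set (ℤ × Bool)) (x : ℤ × Bool),
      φ (chi B) (δ x) = if x ∈ B then δ x else 0)
    (A : H →L[ℂ] H)
    (hA₀ : ∀ n : ℤ, A (δ (n, false)) = (Real.exp (-|(n : ℝ)|) : ℂ) • δ (n, true))
    (hA₁ : ∀ n : ℤ, A (δ (n, true)) = 0) :
    (∃ S : BornCoarse (ℤ × Bool), S.entourages = exampleCoarse ∧
      S.bounded = {B : Set (ℤ × Bool) | B.Finite}) ∧
    (∀ ε : ℝ, 0 < ε → ∃ U ∈ exampleCoarse, ∀ B B' : Set (ℤ × Bool),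
      thick U B ∩ thick U B' = ∅ → ‖φ (chi B') ∘L A ∘L φ (chi B)‖ ≤ ε) ∧
    ¬ ∃ U ∈ exampleCoarse, ∀ ε : ℝ, 0 < ε → ∃ n : ℕ, ∀ B B' : Set (ℤ × Bool),
      thick (iterComp U n) B ∩ thick (iterComp U n) B' = ∅ →
        ‖φ (chi B') ∘L A ∘L φ (chi B)‖ ≤ ε := by
  classical
  have hdense : Dense (↑(Submodule.span ℂ (Set.range δ)) : Set H) :=
    Submodule.dense_iff_topologicalClosure_eq_top.mpr htotal
  have hnorm1 : ∀ x, ‖δ x‖ = 1 := hONB.1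
  have hadj : ∀ B : Set (ℤ × Bool), ContinuousLinearMap.adjoint (φ (chi B)) = φ (chi B) := by
    intro B
    rw [← ContinuousLinearMap.star_eq_adjoint, ← map_star, chi_star]
  have hidem : ∀ (B : Set (ℤ × Bool)) (v : H), φ (chi B) (φ (chi B) v) = φ (chi B) v := by
    intro B v
    have h : φ (chi B) * φ (chi B) = φ (chi B) := by rw [← map_mul, chi_mul_self]
    calc φ (chi B) (φ (chi B) v) = (φ (chi B) * φ (chi B)) v := rfl
      _ = φ (chi B) v := by rw [h]
  have hcontr : ∀ (B : Set (ℤ × Bool)) (v : H), ‖φ (chi B) v‖ ≤ ‖v‖ :=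
    fun B v => proj_contract _ (hadj B) (hidem B) v
  refine ⟨⟨exampleBC, rfl, rfl⟩, ?_, ?_⟩
  · -- part (a)
    intro ε hε
    obtain ⟨N, hN⟩ := exists_nat_one_div_lt hε
    have hcε : Real.exp (-((N : ℝ) + 1)) ≤ ε := by
      have h1 : Real.exp (-((N : ℝ) + 1)) ≤ 1 / ((N : ℝ) + 1) := by
        rw [Real.exp_neg, one_div]
        apply inv_anti₀ (by positivity)
        nlinarith [Real.add_one_le_exp ((N : ℝ) + 1)]
      linarith
    set F : Finset ℤ := Finset.Icc (-(N : ℤ)) (N : ℤ) with hF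
    refine ⟨RR F, ⟨F, subset_rfl⟩, ?_⟩
    intro B B' hsep
    set D : Set (ℤ × Bool) := {x | x ∈ B ∧ x.2 = false ∧ (N : ℤ) + 1 ≤ |x.1|} with hDdef
    have hD : ∀ x ∈ D, x.2 = false ∧ (N : ℤ) + 1 ≤ |x.1| := fun x hx => hx.2
    have Teq : φ (chi B') ∘L A ∘L φ (chi B) = φ (chi B') ∘L A ∘L φ (chi D) := by
      apply ContinuousLinearMap.ext_on hdense
      rintro _ ⟨x, rfl⟩
      simp only [ContinuousLinearMap.comp_apply, hφ]
      by_cases hxB : x ∈ B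
      · obtain ⟨n, b⟩ := x
        cases b with
        | true =>
          have hxD : (n, true) ∉ D := by simp [hDdef]
          simp [hxB, hxD, hA₁]
        | false =>
          by_cases hn : (N : ℤ) + 1 ≤ |n|
          · have hxD : (n, false) ∈ D := ⟨hxB, rfl, hn⟩
            simp [hxB, hxD]
          · have hnF : n ∈ F := by
              rw [hF]
              exact Finset.mem_Icc.2 (abs_le.mp (Int.lt_add_one_iff.mp (not_le.mp hn)))
            have hB' : (n, true) ∉ B' := by
              intro hmemB'
              have h1 : (n, true) ∈ thick (RR F) B :=
                ⟨(n, false), hxB, Or.inr (Set.mem_biUnion hnF (mem_pairFlip.2 (Or.inr rfl)))⟩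
              have h2 : (n, true) ∈ thick (RR F) B' := ⟨(n, true), hmemB', Or.inl rfl⟩
              have h3 : (n, true) ∈ thick (RR F) B ∩ thick (RR F) B' := ⟨h1, h2⟩
              rw [hsep] at h3
              exact h3
            have hxD : (n, false) ∉ D := by
              simp only [hDdef, Set.mem_setOf_eq]
              tauto
            simp [hxB, hxD, hA₀, hφ, hB']
      · have hxD : x ∉ D := fun h => hxB h.1
        simp [hxB, hxD]
    rw [Teq]
    apply ContinuousLinearMap.opNorm_le_bound _ hε.le
    intro v
    have hmemc : φ (chi D) v ∈ closure (↑(Submodule.span ℂ (δ '' D)) : Set H) := by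
      have hv : v ∈ closure (↑(Submodule.span ℂ (Set.range δ)) : Set H) := hdense v
      have himg : φ (chi D) v ∈
          closure (⇑(φ (chi D)) '' ↑(Submodule.span ℂ (Set.range δ))) :=
        image_closure_subset_closure_image (φ (chi D)).continuous
          (Set.mem_image_of_mem _ hv)
      refine closure_mono ?_ himg
      rintro _ ⟨u, hu, rfl⟩
      have h1 : φ (chi D) u ∈
          Submodule.span ℂ (⇑(φ (chi D)) '' Set.range δ) := by
        have := Submodule.mem_map_of_mem (f := (φ (chi D) : H →ₗ[ℂ] H)) hu
        rw [Submodule.map_span] at this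
        exact this
      refine Submodule.span_le.2 ?_ h1
      rintro _ ⟨_, ⟨x, rfl⟩, rfl⟩
      rw [hφ]
      by_cases hx : x ∈ D
      · rw [if_pos hx]
        exact Submodule.subset_span ⟨x, hx, rfl⟩
      · rw [if_neg hx]
        exact (Submodule.span ℂ (δ '' D)).zero_mem
    have hAb : ‖A (φ (chi D) v)‖ ≤ Real.exp (-((N : ℝ) + 1)) * ‖φ (chi D) v‖ := by
      have hclosed : IsClosed {u : H | ‖A u‖ ≤ Real.exp (-((N : ℝ) + 1)) * ‖u‖} :=
        isClosed_le (A.continuous.norm) (continuous_const.mul continuous_norm)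
      have hsub : (↑(Submodule.span ℂ (δ '' D)) : Set H) ⊆
          {u : H | ‖A u‖ ≤ Real.exp (-((N : ℝ) + 1)) * ‖u‖} :=
        fun u hu => A_small δ hONB A hA₀ N D hD u hu
      exact closure_minimal hsub hclosed hmemc
    calc ‖(φ (chi B') ∘L A ∘L φ (chi D)) v‖
        = ‖φ (chi B') (A (φ (chi D) v))‖ := rfl
      _ ≤ ‖A (φ (chi D) v)‖ := hcontr _ _
      _ ≤ Real.exp (-((N : ℝ) + 1)) * ‖φ (chi D) v‖ := hAb
      _ ≤ Real.exp (-((N : ℝ) + 1)) * ‖v‖ :=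
          mul_le_mul_of_nonneg_left (hcontr _ _) (Real.exp_pos _).le
      _ ≤ ε * ‖v‖ := mul_le_mul_of_nonneg_right hcε (norm_nonneg _)
  · -- part (b)
    rintro ⟨U, ⟨F, hF⟩, hq⟩
    obtain ⟨m, hm⟩ := Infinite.exists_notMem_finset F
    have hεpos : 0 < Real.exp (-|(m : ℝ)|) / 2 := by positivity
    obtain ⟨n, hn⟩ := hq _ hεpos
    have hsep : thick (iterComp U n) {((m : ℤ), false)} ∩
        thick (iterComp U n) {((m : ℤ), true)} = ∅ := by
      apply Set.eq_empty_of_subset_empty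
      rintro x ⟨hx1, hx2⟩
      have hmono : ∀ (b : Bool), thick (iterComp U n) {((m : ℤ), b)} ⊆ {((m : ℤ), b)} := by
        intro b y hy
        obtain ⟨c, hc, hyc⟩ := hy
        exact thick_RR_singleton hm b ⟨c, hc, iterComp_subset_RR hF n hyc⟩
      have e1 := hmono false hx1
      have e2 := hmono true hx2
      simp only [Set.mem_singleton_iff] at e1 e2
      rw [e1] at e2
      simp at e2
    have hle := hn _ _ hsep
    set T := φ (chi {((m : ℤ), true)}) ∘L A ∘L φ (chi {((m : ℤ), false)}) with hT
    have hTδ : T (δ (m, false)) = (Real.exp (-|(m : ℝ)|) : ℂ) • δ (m, true) := by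
      have s1 : φ (chi {((m : ℤ), false)}) (δ (m, false)) = δ (m, false) := by
        rw [hφ]; simp
      have s2 : φ (chi {((m : ℤ), true)}) (δ (m, true)) = δ (m, true) := by
        rw [hφ]; simp
      calc T (δ (m, false))
          = φ (chi {((m : ℤ), true)}) (A (φ (chi {((m : ℤ), false)}) (δ (m, false)))) := rfl
        _ = φ (chi {((m : ℤ), true)}) (A (δ (m, false))) := by rw [s1]
        _ = φ (chi {((m : ℤ), true)}) ((Real.exp (-|(m : ℝ)|) : ℂ) • δ (m, true)) := by
            rw [hA₀]
        _ = (Real.exp (-|(m : ℝ)|) : ℂ) • φ (chi {((m : ℤ), true)}) (δ (m, true)) := by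
            rw [map_smul]
        _ = (Real.exp (-|(m : ℝ)|) : ℂ) • δ (m, true) := by rw [s2]
    have h1 : ‖T (δ (m, false))‖ = Real.exp (-|(m : ℝ)|) := by
      rw [hTδ, norm_smul, Complex.norm_real, Real.norm_eq_abs,
        abs_of_pos (Real.exp_pos _), hnorm1, mul_one]
    have h2 := T.le_opNorm (δ (m, false))
    rw [h1, hnorm1, mul_one] at h2
    have := le_trans h2 hle
    linarith [Real.exp_pos (-|(m : ℝ)|)]
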